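/- arXiv:2104.06290 — 3 statements merged into one kernel-verified Lean document; each statement's English description precedes it below -/
import Mathlib

section
/- For every integer n ≥ 1 and nonzero constants a₂,…,a_k ∈ ℂ with |a₂^n + ⋯ + a_k^n| ≤ 1, the function φ(z) = log(1 − a₂^n z^n − ⋯ − a_k^n z^n) is holomorphic on the unit disk 𝔻, and setting f₁ = exp(φ/n) and fⱼ(z) = aⱼ z for j = 2,…,k gives holomorphic functions on 𝔻 satisfying f₁^n + f₂^n + ⋯ + f_k^n = 1. -/
open Metric

/-- For `n ≥ 1` and nonzero constants `a₁, …, a_m` (the `a₂, …, a_k` of the equation,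
`m = k − 1 ≥ 1`) with `|a₁^n + ⋯ + a_m^n| ≤ 1`, there is a holomorphic branch `φ` of
`log (1 − (a₁^n + ⋯ + a_m^n) z^n)` on the unit disk, and `f₁ = exp (φ/n)`,
`f_{j+1}(z) = a_j z` are holomorphic on `𝔻` and satisfy `f₁^n + f₂^n + ⋯ + f_k^n = 1`. -/
theorem fermat_k_term_holomorphic_solution_disk (n : ℕ) (hn : 1 ≤ n)
    (m : ℕ) (hm : 1 ≤ m) (a : Fin m → ℂ) (ha : ∀ j, a j ≠ 0)
    (hsum : ‖∑ j : Fin m, a j ^ n‖ ≤ 1) :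
    ∃ φ : ℂ → ℂ, DifferentiableOn ℂ φ (ball (0 : ℂ) 1) ∧
      (∀ z ∈ ball (0 : ℂ) 1, Complex.exp (φ z) = 1 - (∑ j : Fin m, a j ^ n) * z ^ n) ∧
      DifferentiableOn ℂ (fun z => Complex.exp (φ z / n)) (ball (0 : ℂ) 1) ∧
      (∀ z ∈ ball (0 : ℂ) 1,
        Complex.exp (φ z / n) ^ n + ∑ j : Fin m, (a j * z) ^ n = 1) := by
  set S : ℂ := ∑ j : Fin m, a j ^ n with hS
  refine ⟨fun z => Complex.log (1 - S * z ^ n), ?_, ?_, ?_, ?_⟩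
  · -- first show key norm bound
    intro z hz
    have hz' : ‖z‖ < 1 := by simpa using hz
    have hlt : ‖S * z ^ n‖ < 1 := by
      rw [norm_mul, norm_pow]
      calc ‖S‖ * ‖z‖ ^ n ≤ 1 * ‖z‖ ^ n := by
            exact mul_le_mul_of_nonneg_right hsum (by positivity)
        _ = ‖z‖ ^ n := one_mul _
        _ < 1 := pow_lt_one₀ (norm_nonneg z) hz' (by omega)
    have hre : 0 < (1 - S * z ^ n).re := by
      have := (Complex.abs_re_le_norm (S * z ^ n))
      have h2 : |(S * z ^ n).re| < 1 := lt_of_le_of_lt this hlt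
      simp only [Complex.sub_re, Complex.one_re, Complex.mul_re]
      have := abs_lt.mp h2
      simp only [Complex.mul_re] at this ⊢
      linarith [this.2]
    exact DifferentiableAt.differentiableWithinAt <|
      (Complex.differentiableAt_log (Or.inl hre)).comp (f := fun w => 1 - S * w ^ n) z
        (by fun_prop)
  · intro z hz
    have hz' : ‖z‖ < 1 := by simpa using hz
    have hlt : ‖S * z ^ n‖ < 1 := by
      rw [norm_mul, norm_pow]
      calc ‖S‖ * ‖z‖ ^ n ≤ 1 * ‖z‖ ^ n :=
            mul_le_mul_of_nonneg_right hsum (by positivity)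
        _ = ‖z‖ ^ n := one_mul _
        _ < 1 := pow_lt_one₀ (norm_nonneg z) hz' (by omega)
    have hne : (1 : ℂ) - S * z ^ n ≠ 0 := by
      intro h
      have : ‖S * z ^ n‖ = 1 := by
        have : S * z ^ n = 1 := by linear_combination -h
        simp [this]
      linarith
    exact Complex.exp_log hne
  · intro z hz
    have hz' : ‖z‖ < 1 := by simpa using hz
    have hlt : ‖S * z ^ n‖ < 1 := by
      rw [norm_mul, norm_pow]
      calc ‖S‖ * ‖z‖ ^ n ≤ 1 * ‖z‖ ^ n :=
            mul_le_mul_of_nonneg_right hsum (by positivity)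
        _ = ‖z‖ ^ n := one_mul _
        _ < 1 := pow_lt_one₀ (norm_nonneg z) hz' (by omega)
    have hre : 0 < (1 - S * z ^ n).re := by
      have := (Complex.abs_re_le_norm (S * z ^ n))
      have h2 : |(S * z ^ n).re| < 1 := lt_of_le_of_lt this hlt
      simp only [Complex.sub_re, Complex.one_re]
      have := abs_lt.mp h2
      linarith [this.2]
    refine DifferentiableAt.differentiableWithinAt ?_
    apply Complex.differentiableAt_exp.comp
    apply DifferentiableAt.div_const
    exact (Complex.differentiableAt_log (Or.inl hre)).comp (f := fun w => 1 - S * w ^ n) z (by fun_prop)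
  · intro z hz
    have hz' : ‖z‖ < 1 := by simpa using hz
    have hlt : ‖S * z ^ n‖ < 1 := by
      rw [norm_mul, norm_pow]
      calc ‖S‖ * ‖z‖ ^ n ≤ 1 * ‖z‖ ^ n :=
            mul_le_mul_of_nonneg_right hsum (by positivity)
        _ = ‖z‖ ^ n := one_mul _
        _ < 1 := pow_lt_one₀ (norm_nonneg z) hz' (by omega)
    have hne : (1 : ℂ) - S * z ^ n ≠ 0 := by
      intro h
      have : ‖S * z ^ n‖ = 1 := by
        have : S * z ^ n = 1 := by linear_combination -h
        simp [this]
      linarith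
    have hnz : (n : ℂ) ≠ 0 := Nat.cast_ne_zero.mpr (by omega)
    have hpow : Complex.exp (Complex.log (1 - S * z ^ n) / n) ^ n
        = Complex.exp (Complex.log (1 - S * z ^ n)) := by
      rw [← Complex.exp_nat_mul]
      congr 1
      field_simp
    rw [hpow, Complex.exp_log hne]
    have : ∑ j : Fin m, (a j * z) ^ n = S * z ^ n := by
      simp [hS, Finset.sum_mul, mul_pow]
    rw [this]; ring
end

section
/- Let n₁,…,n_k ≥ 1 be integers, let n = lcm(n₁,…,n_k) and write n = pⱼ nⱼ. Let a₂,…,a_k be nonzero constants with |a₂^{n₂} + ⋯ + a_k^{n_k}| ≤ 1. Then ψ(z) = log(1 − a₂^{n₂} z^n − ⋯ − a_k^{n_k} z^n) is holomorphic on 𝔻, and the functions f₁ = exp(ψ/n₁), fⱼ(z) = aⱼ z^{pⱼ} (j = 2,…,k) are holomorphic on 𝔻 and satisfy f₁^{n₁} + f₂^{n₂} + ⋯ + f_k^{n_k} = 1. -/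
open Metric

/-- Let `n₀, …, n_m ≥ 1` (`k = m + 1 ≥ 2` exponents) with least common multiple
`n = p j * n j`, and let `a₁, …, a_m` be nonzero constants with `|∑_{j≠0} a_j^{n_j}| ≤ 1`.
Then `ψ(z) = log (1 − ∑_{j≠0} a_j^{n_j} z^n)` admits a holomorphic branch on the unit
disk, and `f₀ = exp (ψ/n₀)`, `f_j(z) = a_j z^{p_j}` (`j ≠ 0`) are holomorphic on `𝔻` and
satisfy `f₀^{n₀} + ∑_{j≠0} f_j^{n_j} = 1`. -/
theorem generalized_fermat_holomorphic_solution_disk (m : ℕ) (hm : 1 ≤ m)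
    (nv : Fin (m + 1) → ℕ) (hnv : ∀ j, 1 ≤ nv j)
    (n : ℕ) (hlcm : n = Finset.univ.lcm nv)
    (p : Fin (m + 1) → ℕ) (hp : ∀ j, nv j * p j = n)
    (a : Fin (m + 1) → ℂ) (ha : ∀ j, j ≠ 0 → a j ≠ 0)
    (hsum : ‖∑ j ∈ Finset.univ.filter (· ≠ (0 : Fin (m + 1))), a j ^ nv j‖ ≤ 1) :
    ∃ ψ : ℂ → ℂ, DifferentiableOn ℂ ψ (ball (0 : ℂ) 1) ∧
      (∀ z ∈ ball (0 : ℂ) 1, Complex.exp (ψ z) =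
        1 - (∑ j ∈ Finset.univ.filter (· ≠ (0 : Fin (m + 1))), a j ^ nv j) * z ^ n) ∧
      DifferentiableOn ℂ (fun z => Complex.exp (ψ z / (nv 0 : ℂ))) (ball (0 : ℂ) 1) ∧
      (∀ z ∈ ball (0 : ℂ) 1,
        Complex.exp (ψ z / (nv 0 : ℂ)) ^ (nv 0)
          + ∑ j ∈ Finset.univ.filter (· ≠ (0 : Fin (m + 1))),
              (a j * z ^ p j) ^ nv j = 1) := by
  set c : ℂ := ∑ j ∈ Finset.univ.filter (· ≠ (0 : Fin (m + 1))), a j ^ nv j with hc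
  have hn : 1 ≤ n := by
    rcases Nat.eq_zero_or_pos n with h | h
    · exfalso
      have := hp 0
      rw [h, Nat.mul_eq_zero] at this
      rcases this with h1 | h1
      · exact absurd h1 (Nat.one_le_iff_ne_zero.mp (hnv 0))
      · -- n = 0 and p 0 = 0; contradiction via lcm positivity
        have h2 := hp 1
        rw [h] at h2
        -- need lcm ≠ 0
        have : Finset.univ.lcm nv ≠ 0 := by
          rw [Ne, Finset.lcm_eq_zero_iff]
          intro hx
          obtain ⟨j, _, hj⟩ := hx
          exact Nat.one_le_iff_ne_zero.mp (hnv j) hj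
        rw [← hlcm, h] at this
        exact this rfl
    · exact h
  have hslit : ∀ z ∈ ball (0 : ℂ) 1, (1 - c * z ^ n) ∈ Complex.slitPlane := by
    intro z hz
    have hz1 : ‖z‖ < 1 := by simpa using hz
    have hlt : ‖c * z ^ n‖ < 1 := by
      rw [norm_mul, norm_pow]
      calc ‖c‖ * ‖z‖ ^ n ≤ 1 * ‖z‖ ^ n := by
            apply mul_le_mul_of_nonneg_right hsum (by positivity)
        _ = ‖z‖ ^ n := one_mul _
        _ < 1 := pow_lt_one₀ (norm_nonneg _) hz1 (by omega)
    rw [Complex.mem_slitPlane_iff]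
    left
    have : |(c * z ^ n).re| < 1 := lt_of_le_of_lt (Complex.abs_re_le_norm _) hlt
    have := abs_lt.mp this
    simp only [Complex.sub_re, Complex.one_re]
    linarith [this.2]
  have hne : ∀ z ∈ ball (0 : ℂ) 1, (1 - c * z ^ n) ≠ 0 := fun z hz =>
    Complex.slitPlane_ne_zero (hslit z hz)
  refine ⟨fun z => Complex.log (1 - c * z ^ n), ?_, ?_, ?_, ?_⟩
  · intro z hz
    apply DifferentiableAt.differentiableWithinAt
    exact (Complex.differentiableAt_log (hslit z hz)).comp (x := z) (f := fun w => 1 - c * w ^ n)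
      (by fun_prop)
  · intro z hz
    exact Complex.exp_log (hne z hz)
  · intro z hz
    apply DifferentiableAt.differentiableWithinAt
    apply DifferentiableAt.cexp
    apply DifferentiableAt.div_const
    exact (Complex.differentiableAt_log (hslit z hz)).comp (x := z) (f := fun w => 1 - c * w ^ n) (by fun_prop)
  · intro z hz
    have hnv0 : (nv 0 : ℂ) ≠ 0 := Nat.cast_ne_zero.mpr (Nat.one_le_iff_ne_zero.mp (hnv 0))
    have h1 : Complex.exp (Complex.log (1 - c * z ^ n) / (nv 0 : ℂ)) ^ nv 0
        = 1 - c * z ^ n := by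
      rw [← Complex.exp_nat_mul]
      rw [mul_div_cancel₀ _ hnv0]
      exact Complex.exp_log (hne z hz)
    have h2 : ∑ j ∈ Finset.univ.filter (· ≠ (0 : Fin (m + 1))), (a j * z ^ p j) ^ nv j
        = c * z ^ n := by
      rw [hc, Finset.sum_mul]
      apply Finset.sum_congr rfl
      intro j hj
      rw [mul_pow, ← pow_mul, mul_comm (p j) (nv j), hp j]
    rw [h1, h2]
    ring
end

section
/- For any entire function α on ℂ, the functions f₁ = 2^{-3/4}(e^{3α} + e^{-α}), f₂ = (−2)^{-3/4}(e^{3α} − e^{-α}), f₃ = (−1)^{1/4} e^{2α} satisfy f₁⁴ + f₂⁴ + f₃⁴ = 1, where (−2)^{-3/4} and (−1)^{1/4} denote fixed fourth-roots with ((−2)^{-3/4})⁴ = −1/8 and ((−1)^{1/4})⁴ = −1. -/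
/-- For any entire function `α` on `ℂ`, the functions `f₁ = 2^{-3/4}(e^{3α} + e^{-α})`,
`f₂ = (−2)^{-3/4}(e^{3α} − e^{-α})`, `f₃ = (−1)^{1/4} e^{2α}` satisfy
`f₁⁴ + f₂⁴ + f₃⁴ = 1`, where `(−2)^{-3/4}` and `(−1)^{1/4}` denote fixed fourth-roots
with `((−2)^{-3/4})⁴ = −1/8` and `((−1)^{1/4})⁴ = −1`. -/
theorem fermat_quartic_three_term_parametric (α : ℂ → ℂ) (hα : Differentiable ℂ α)
    (c d : ℂ) (hc : c ^ 4 = -(1 / 8)) (hd : d ^ 4 = -1) (z : ℂ) :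
    ((((2 : ℝ) ^ (-(3 / 4) : ℝ) : ℝ) : ℂ) * (Complex.exp (3 * α z) + Complex.exp (-α z))) ^ 4
      + (c * (Complex.exp (3 * α z) - Complex.exp (-α z))) ^ 4
      + (d * Complex.exp (2 * α z)) ^ 4 = 1 := by
  have hr : ((((2 : ℝ) ^ (-(3 / 4) : ℝ) : ℝ) : ℂ)) ^ 4 = 1 / 8 := by
    have : ((2 : ℝ) ^ (-(3 / 4) : ℝ)) ^ 4 = (1 / 8 : ℝ) := by
      rw [← Real.rpow_natCast ((2 : ℝ) ^ (-(3 / 4) : ℝ)) 4, ← Real.rpow_mul (by norm_num)]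
      norm_num
    rw [← Complex.ofReal_pow, this]
    norm_num
  set a := α z
  have h3 : Complex.exp (3 * a) = Complex.exp a ^ 3 := by
    rw [show (3 : ℂ) * a = (3 : ℕ) * a by norm_num, Complex.exp_nat_mul]
  have h2 : Complex.exp (2 * a) = Complex.exp a ^ 2 := by
    rw [show (2 : ℂ) * a = (2 : ℕ) * a by norm_num, Complex.exp_nat_mul]
  have hn : Complex.exp (-a) = (Complex.exp a)⁻¹ := Complex.exp_neg a
  have hne := Complex.exp_ne_zero a
  rw [mul_pow, mul_pow, mul_pow, hr, hc, hd, h3, h2, hn]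
  field_simp
  ring
end
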